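/- arXiv:2112.00877 — 3 statements merged into one kernel-verified Lean document; each statement's English description precedes it below -/
import Mathlib

section
/- Let k ≥ 1, let Γ be a countable type, and let μ : Γ → ℝ^k satisfy μ(γ)_i ≥ 0 for all γ ∈ Γ and all 1 ≤ i ≤ k. Let u ∈ ℝ^k have u_i > 0 for every i, let α ∈ ℝ^k satisfy ⟨α, u⟩ = 1, and let δ > 0 and R > 0 be real numbers. Assume that the abscissa of convergence of the restriction of the function γ ↦ δ·⟨α, μ(γ)⟩ to the subtype {γ ∈ Γ : the Euclidean distance from μ(γ) to the line ℝ·u is at most R} is equal to 1. Then for every index 1 ≤ i ≤ k one has δ ≤ u_i · δ_i, where δ_i is the abscissa of convergence of the function γ ↦ μ(γ)_i; in particular δ ≤ min_{1 ≤ i ≤ k} u_i · δ_i. -/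
open scoped ENNReal InnerProductSpace

/-- The abscissa of convergence of a weight function `w : ι → ℝ`: the infimum in `[0,∞]`
of the set of `s ≥ 0` such that `∑ exp(-s · w i)` converges, and `∞` if this set is empty. -/
noncomputable def abscissa {ι : Type*} (w : ι → ℝ) : ℝ≥0∞ :=
  sInf {x : ℝ≥0∞ | ∃ s : ℝ, 0 ≤ s ∧ Summable (fun i => Real.exp (-s * w i)) ∧
    x = ENNReal.ofReal s}

/-- Coordinate bound in Euclidean space. -/
lemma abs_coord_le_norm {k : ℕ} (v : EuclideanSpace ℝ (Fin k)) (i : Fin k) :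
    |v i| ≤ ‖v‖ := by
  rw [EuclideanSpace.norm_eq]
  have h1 : |v i| = Real.sqrt (‖v i‖ ^ 2) := by
    rw [Real.sqrt_sq_eq_abs]; simp [Real.norm_eq_abs]
  rw [h1]
  apply Real.sqrt_le_sqrt
  exact Finset.single_le_sum (f := fun j => ‖v j‖ ^ 2)
    (fun j _ => sq_nonneg _) (Finset.mem_univ i)

/-- Tent property, core inequality: if the abscissa of convergence of `γ ↦ δ·⟨α, μ γ⟩`
restricted to the strip `{γ | dist(μ γ, ℝ·u) ≤ R}` equals `1`, then `δ ≤ uᵢ · δᵢ`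
for each coordinate `i`, and in particular `δ ≤ min_i uᵢ · δᵢ`. -/
theorem stmt0 (k : ℕ) (hk : 1 ≤ k) (Γ : Type*) [Countable Γ]
    (μ : Γ → EuclideanSpace ℝ (Fin k)) (hμ : ∀ γ i, 0 ≤ μ γ i)
    (u : EuclideanSpace ℝ (Fin k)) (hu : ∀ i, 0 < u i)
    (α : EuclideanSpace ℝ (Fin k)) (hα : ⟪α, u⟫_ℝ = 1)
    (δ R : ℝ) (hδ : 0 < δ) (hR : 0 < R)
    (hstrip : abscissa
      (fun γ : {γ : Γ // Metric.infDist (μ γ) (Set.range fun t : ℝ => t • u) ≤ R} =>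
        δ * ⟪α, μ γ.1⟫_ℝ) = 1) :
    (∀ i : Fin k,
      ENNReal.ofReal δ ≤ ENNReal.ofReal (u i) * abscissa (fun γ => μ γ i)) ∧
    ENNReal.ofReal δ ≤ ⨅ i : Fin k, ENNReal.ofReal (u i) * abscissa (fun γ => μ γ i) := by
  -- main claim: any `s` in the defining set for coordinate `i` satisfies `δ ≤ u i * s`
  have key : ∀ (i : Fin k) (s : ℝ), 0 ≤ s →
      Summable (fun γ : Γ => Real.exp (-s * μ γ i)) → δ ≤ u i * s := by
    intro i s hs0 hsum
    set T : Set (EuclideanSpace ℝ (Fin k)) := Set.range fun t : ℝ => t • u with hT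
    -- restrict the summability to the strip
    have sum1 : Summable (fun γ : {γ : Γ // Metric.infDist (μ γ) T ≤ R} =>
        Real.exp (-s * μ γ.1 i)) :=
      hsum.subtype {γ : Γ | Metric.infDist (μ γ) T ≤ R}
    set C : ℝ := (R + 1) + u i * (‖α‖ * (R + 1)) with hC
    -- geometric bound on the strip
    have bound : ∀ γ : {γ : Γ // Metric.infDist (μ γ) T ≤ R},
        μ γ.1 i ≤ u i * ⟪α, μ γ.1⟫_ℝ + C := by
      rintro ⟨γ, hγ⟩
      have hne : T.Nonempty := ⟨(0 : ℝ) • u, Set.mem_range_self 0⟩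
      have hlt : Metric.infDist (μ γ) T < R + 1 := lt_of_le_of_lt hγ (by linarith)
      obtain ⟨y, hyT, hy⟩ := (Metric.infDist_lt_iff hne).mp hlt
      obtain ⟨t, rfl⟩ := hyT
      set v : EuclideanSpace ℝ (Fin k) := μ γ - t • u with hv
      have hvn : ‖v‖ < R + 1 := by rwa [hv, ← dist_eq_norm]
      have hvi : |v i| ≤ ‖v‖ := abs_coord_le_norm v i
      have hvα : |⟪α, v⟫_ℝ| ≤ ‖α‖ * ‖v‖ := abs_real_inner_le_norm α v
      have hμγ : μ γ = t • u + v := by rw [hv]; abel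
      have hcoord : μ γ i = t * u i + v i := by
        rw [hμγ]; simp [PiLp.add_apply, PiLp.smul_apply, smul_eq_mul]
      have hinner : ⟪α, μ γ⟫_ℝ = t + ⟪α, v⟫_ℝ := by
        rw [hμγ, inner_add_right, real_inner_smul_right, hα, mul_one]
      have ht : t ≤ ⟪α, μ γ⟫_ℝ + ‖α‖ * (R + 1) := by
        have := abs_le.mp hvα
        have hαn : (0:ℝ) ≤ ‖α‖ := norm_nonneg _
        nlinarith [hvn]
      have habs := abs_le.mp hvi
      have hui := hu i
      have hαn : (0:ℝ) ≤ ‖α‖ := norm_nonneg _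
      rw [hcoord, hC]
      nlinarith [hvn]
    -- summability of the strip weight at parameter u i * s / δ
    have sum2 : Summable (fun γ : {γ : Γ // Metric.infDist (μ γ) T ≤ R} =>
        Real.exp (-(u i * s / δ) * (δ * ⟪α, μ γ.1⟫_ℝ))) := by
      refine Summable.of_nonneg_of_le (fun γ => (Real.exp_pos _).le)
        (fun γ => ?_) (sum1.mul_left (Real.exp (s * C)))
      · rw [← Real.exp_add]
        apply Real.exp_le_exp.mpr
        have h1 : -(u i * s / δ) * (δ * ⟪α, μ γ.1⟫_ℝ) = -(u i * s) * ⟪α, μ γ.1⟫_ℝ := by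
          field_simp
        rw [h1]
        have hb := bound γ
        nlinarith [mul_le_mul_of_nonneg_left hb hs0]
    -- conclude via the strip abscissa
    have hmem : ENNReal.ofReal (u i * s / δ) ∈
        {x : ℝ≥0∞ | ∃ s' : ℝ, 0 ≤ s' ∧
          Summable (fun γ : {γ : Γ // Metric.infDist (μ γ) T ≤ R} =>
            Real.exp (-s' * (δ * ⟪α, μ γ.1⟫_ℝ))) ∧ x = ENNReal.ofReal s'} :=
      ⟨u i * s / δ, div_nonneg (mul_nonneg (hu i).le hs0) hδ.le, sum2, rfl⟩
    have hle : abscissa (fun γ : {γ : Γ // Metric.infDist (μ γ) T ≤ R} =>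
        δ * ⟪α, μ γ.1⟫_ℝ) ≤ ENNReal.ofReal (u i * s / δ) := sInf_le hmem
    rw [hstrip] at hle
    have : (1 : ℝ) ≤ u i * s / δ := ENNReal.one_le_ofReal.mp hle
    rw [le_div_iff₀ hδ, one_mul] at this
    linarith
  have main : ∀ i : Fin k,
      ENNReal.ofReal δ ≤ ENNReal.ofReal (u i) * abscissa (fun γ => μ γ i) := by
    intro i
    have h1 : ENNReal.ofReal (δ / u i) ≤ abscissa (fun γ => μ γ i) := by
      apply le_sInf
      rintro x ⟨s, hs0, hsum, rfl⟩
      apply ENNReal.ofReal_le_ofReal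
      rw [div_le_iff₀ (hu i)]
      have := key i s hs0 hsum
      linarith [this]
    calc ENNReal.ofReal δ = ENNReal.ofReal (u i) * ENNReal.ofReal (δ / u i) := by
          rw [← ENNReal.ofReal_mul (hu i).le]
          congr 1
          rw [mul_comm, div_mul_cancel₀ _ (hu i).ne']
      _ ≤ ENNReal.ofReal (u i) * abscissa (fun γ => μ γ i) := mul_le_mul_right h1 _
  exact ⟨main, le_iInf main⟩
end

section
/- Let k ≥ 1, d_1, …, d_k > 0 be real numbers, let α ∈ ℝ^k be nonzero, and let u ∈ ℝ^k satisfy ⟨α, u⟩ = 1. Let f : ℝ^k → ℝ be differentiable at u with gradient ∇f(u) a scalar multiple of α. Define T(v) = min_{1 ≤ i ≤ k} d_i · v_i. Suppose that f(v) ≤ T(v) for every v ∈ ℝ^k with ⟨α, v⟩ = 1, and that f(u) = T(u). Then α is a scalar multiple of some standard basis vector e_i of ℝ^k. -/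
open scoped ENNReal InnerProductSpace

/-- Equality case of the tent property: if `f` is differentiable at `u` with gradient
parallel to `α`, `f ≤ T` on the affine slice `{v | ⟨α, v⟩ = 1}` where
`T v = min_i dᵢ · vᵢ`, and `f(u) = T(u)`, then `α` is a scalar multiple of one of the
standard basis vectors. -/
theorem stmt1 (k : ℕ) (hk : 1 ≤ k) (d : Fin k → ℝ) (hd : ∀ i, 0 < d i)
    (α : EuclideanSpace ℝ (Fin k)) (hα : α ≠ 0)
    (u : EuclideanSpace ℝ (Fin k)) (hu : ⟪α, u⟫_ℝ = 1)
    (f : EuclideanSpace ℝ (Fin k) → ℝ)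
    (hgrad : ∃ c : ℝ, HasGradientAt f (c • α) u)
    (hle : ∀ v : EuclideanSpace ℝ (Fin k), ⟪α, v⟫_ℝ = 1 → f v ≤ ⨅ i : Fin k, d i * v i)
    (heq : f u = ⨅ i : Fin k, d i * u i) :
    ∃ (i : Fin k) (c : ℝ), α = c • (EuclideanSpace.single i 1) := by
  obtain ⟨c, hc⟩ := hgrad
  haveI : Nonempty (Fin k) := ⟨⟨0, hk⟩⟩
  -- the infimum is a minimum
  obtain ⟨i₀, hi₀⟩ := Finite.exists_min (fun i : Fin k => d i * u i)
  have hbdd : ∀ v : EuclideanSpace ℝ (Fin k), (⨅ i : Fin k, d i * v i) ≤ d i₀ * v i₀ :=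
    fun v => ciInf_le (Set.Finite.bddBelow (Set.finite_range _)) i₀
  have hmin : (⨅ i : Fin k, d i * u i) = d i₀ * u i₀ :=
    le_antisymm (hbdd u) (le_ciInf hi₀)
  -- key step: every w orthogonal to α has w i₀ = 0
  have key : ∀ w : EuclideanSpace ℝ (Fin k), ⟪α, w⟫_ℝ = 0 → w i₀ = 0 := by
    intro w hw
    set ψ : ℝ → ℝ := fun t => f (u + t • w) - t * (d i₀ * w i₀) with hψ
    have hmax : IsLocalMax ψ 0 := by
      apply Filter.Eventually.of_forall
      intro t
      have hslice : ⟪α, u + t • w⟫_ℝ = 1 := by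
        rw [inner_add_right, real_inner_smul_right, hw, hu]; ring
      have h1 : f (u + t • w) ≤ d i₀ * (u + t • w) i₀ :=
        (hle _ hslice).trans (hbdd _)
      have h2 : (u + t • w) i₀ = u i₀ + t * w i₀ := rfl
      simp only [ψ, h2] at h1 ⊢
      simp only [smul_eq_mul, zero_mul, sub_zero, zero_smul, add_zero, heq, hmin]
      nlinarith [h1]
    have hγ : HasDerivAt (fun t : ℝ => u + t • w) w 0 := by
      simpa using ((hasDerivAt_id (0:ℝ)).smul_const w).const_add u
    have hc2 : HasFDerivAt f ((InnerProductSpace.toDual ℝ (EuclideanSpace ℝ (Fin k))) (c • α))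
        (u + (0:ℝ) • w) := by
      simpa using hc.hasFDerivAt
    have hcomp : HasDerivAt (fun t : ℝ => f (u + t • w)) ⟪c • α, w⟫_ℝ 0 := by
      have := hc2.comp_hasDerivAt 0 hγ
      simpa only [Function.comp_def, InnerProductSpace.toDual_apply_apply] using this
    have hψ' : HasDerivAt ψ (⟪c • α, w⟫_ℝ - d i₀ * w i₀) 0 := by
      have h := hcomp.sub ((hasDerivAt_id (0:ℝ)).mul_const (d i₀ * w i₀))
      simp only [one_mul] at h
      exact h
    have hz := hmax.hasDerivAt_eq_zero hψ'
    rw [real_inner_smul_left, hw] at hz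
    have h0 : d i₀ * w i₀ = 0 := by linarith
    exact (mul_eq_zero.mp h0).resolve_left (hd i₀).ne'
  -- consequence: for every j, ‖α‖² * (e_j) i₀ = α j * α i₀
  have key2 : ∀ j : Fin k, ‖α‖^2 * (EuclideanSpace.single j (1:ℝ)) i₀ = α j * α i₀ := by
    intro j
    have hw : ⟪α, (‖α‖^2 : ℝ) • (EuclideanSpace.single j (1:ℝ)) - (α j) • α⟫_ℝ = 0 := by
      rw [inner_sub_right, real_inner_smul_right, real_inner_smul_right,
        EuclideanSpace.inner_single_right, real_inner_self_eq_norm_sq]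
      simp
      ring
    have h := key _ hw
    have happ : ((‖α‖^2 : ℝ) • (EuclideanSpace.single j (1:ℝ)) - (α j) • α) i₀
        = ‖α‖^2 * (EuclideanSpace.single j (1:ℝ)) i₀ - α j * α i₀ := rfl
    rw [happ] at h
    linarith
  have hn : ‖α‖^2 ≠ 0 := pow_ne_zero _ (norm_ne_zero_iff.mpr hα)
  have hni : α i₀ ≠ 0 := by
    intro h0
    have := key2 i₀
    rw [h0, mul_zero, EuclideanSpace.single_apply, if_pos rfl, mul_one] at this
    exact hn this
  refine ⟨i₀, α i₀, ?_⟩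
  ext j
  by_cases hj : j = i₀
  · subst hj
    simp [EuclideanSpace.single_apply]
  · have := key2 j
    rw [EuclideanSpace.single_apply, if_neg (fun h => hj h.symm), mul_zero] at this
    have hzero : α j = 0 := by
      rcases mul_eq_zero.mp this.symm with h | h
      · exact h
      · exact absurd h hni
    simp [hzero, EuclideanSpace.single_apply, hj]
end

section
/- Let k ≥ 1, let Γ be a countable type, and let μ : Γ → ℝ^k satisfy μ(γ)_i ≥ 0 for all γ and i. Then for every u ∈ ℝ^k with u_i > 0 for all i, the growth indicator satisfies ψ_μ(u) ≤ (min_{1 ≤ i ≤ k} u_i) · δ_min and ψ_μ(u) ≤ (max_{1 ≤ i ≤ k} u_i) · δ_max, where δ_min is the abscissa of convergence of γ ↦ min_{1 ≤ i ≤ k} μ(γ)_i and δ_max is the abscissa of convergence of γ ↦ max_{1 ≤ i ≤ k} μ(γ)_i. -/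
open scoped ENNReal InnerProductSpace

/-- The growth indicator of a nonzero vector `v`, associated to `μ : Γ → ℝ^k`:
`ψ_μ(v) = ‖v‖ · inf { δ(w_C) | C an open cone containing v }`, where `w_C` is the
restriction of `γ ↦ ‖μ γ‖` to `{γ | μ γ ∈ C}`. -/
noncomputable def growthIndicator {k : ℕ} {Γ : Type*} (μ : Γ → EuclideanSpace ℝ (Fin k))
    (v : EuclideanSpace ℝ (Fin k)) : ℝ≥0∞ :=
  ENNReal.ofReal ‖v‖ * sInf {x : ℝ≥0∞ | ∃ C : Set (EuclideanSpace ℝ (Fin k)),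
    IsOpen C ∧ (∀ w ∈ C, ∀ c : ℝ, 0 < c → c • w ∈ C) ∧ v ∈ C ∧
    x = abscissa (fun γ : {γ : Γ // μ γ ∈ C} => ‖μ γ.1‖)}

/-- Key helper: if for every ε > 0 there is an open cone `C` containing `u` on which
`w γ * ‖u‖ ≤ (1+ε) * c * ‖μ γ‖`, then `ψ(u) ≤ c * abscissa w`. -/
lemma growthIndicator_le_of_cones {k : ℕ} {Γ : Type*} (μ : Γ → EuclideanSpace ℝ (Fin k))
    (u : EuclideanSpace ℝ (Fin k)) (hu : 0 < ‖u‖) (w : Γ → ℝ) (c : ℝ) (hc : 0 < c)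
    (hcone : ∀ ε : ℝ, 0 < ε → ∃ C : Set (EuclideanSpace ℝ (Fin k)),
      IsOpen C ∧ (∀ v ∈ C, ∀ r : ℝ, 0 < r → r • v ∈ C) ∧ u ∈ C ∧
      ∀ γ, μ γ ∈ C → w γ * ‖u‖ ≤ (1 + ε) * c * ‖μ γ‖) :
    growthIndicator μ u ≤ ENNReal.ofReal c * abscissa w := by
  -- Step 1: for each admissible s and each ε>0, ψ(u) ≤ ofReal ((1+ε)*c*s)
  have key : ∀ s : ℝ, 0 ≤ s → Summable (fun γ => Real.exp (-s * w γ)) →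
      ∀ ε : ℝ, 0 < ε → growthIndicator μ u ≤ ENNReal.ofReal ((1 + ε) * c * s) := by
    intro s hs hsum ε hε
    obtain ⟨C, hCopen, hCcone, huC, hCest⟩ := hcone ε hε
    set s' : ℝ := (1 + ε) * c * s / ‖u‖ with hs'def
    have hs' : 0 ≤ s' := by positivity
    have hsum' : Summable (fun γ : {γ : Γ // μ γ ∈ C} => Real.exp (-s' * ‖μ γ.1‖)) := by
      refine Summable.of_nonneg_of_le (fun γ => (Real.exp_pos _).le) (fun γ => ?_)
        (hsum.subtype _)
      refine Real.exp_le_exp.2 ?_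
      have h1 := hCest γ.1 γ.2
      have h2 : s * (w γ.1 * ‖u‖) ≤ s * ((1 + ε) * c * ‖μ γ.1‖) :=
        mul_le_mul_of_nonneg_left h1 hs
      have : s * w γ.1 ≤ s' * ‖μ γ.1‖ := by
        rw [hs'def, div_mul_eq_mul_div, le_div_iff₀ hu]
        nlinarith
      linarith
    have habs : abscissa (fun γ : {γ : Γ // μ γ ∈ C} => ‖μ γ.1‖) ≤ ENNReal.ofReal s' :=
      sInf_le ⟨s', hs', hsum', rfl⟩
    have hmem : abscissa (fun γ : {γ : Γ // μ γ ∈ C} => ‖μ γ.1‖) ∈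
        {x : ℝ≥0∞ | ∃ C : Set (EuclideanSpace ℝ (Fin k)),
          IsOpen C ∧ (∀ w ∈ C, ∀ c : ℝ, 0 < c → c • w ∈ C) ∧ u ∈ C ∧
          x = abscissa (fun γ : {γ : Γ // μ γ ∈ C} => ‖μ γ.1‖)} :=
      ⟨C, hCopen, hCcone, huC, rfl⟩
    calc growthIndicator μ u
        ≤ ENNReal.ofReal ‖u‖ * abscissa (fun γ : {γ : Γ // μ γ ∈ C} => ‖μ γ.1‖) :=
          mul_le_mul_right (sInf_le hmem) _
      _ ≤ ENNReal.ofReal ‖u‖ * ENNReal.ofReal s' := mul_le_mul_right habs _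
      _ = ENNReal.ofReal (‖u‖ * s') := (ENNReal.ofReal_mul hu.le).symm
      _ = ENNReal.ofReal ((1 + ε) * c * s) := by
          rw [hs'def]; congr 1; field_simp
  -- Step 2: remove ε
  have key2 : ∀ s : ℝ, 0 ≤ s → Summable (fun γ => Real.exp (-s * w γ)) →
      growthIndicator μ u ≤ ENNReal.ofReal (c * s) := by
    intro s hs hsum
    refine ENNReal.le_of_forall_pos_le_add fun η hη _ => ?_
    have hcs : (0:ℝ) ≤ c * s := by positivity
    set ε : ℝ := η / (c * s + 1) with hεdef
    have hε : 0 < ε := by positivity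
    refine (key s hs hsum ε hε).trans ?_
    have : (1 + ε) * c * s = c * s + ε * (c * s) := by ring
    rw [this]
    refine (ENNReal.ofReal_add_le).trans (add_le_add le_rfl ?_)
    have : ε * (c * s) ≤ η := by
      rw [hεdef, div_mul_eq_mul_div, div_le_iff₀ (by positivity)]
      nlinarith [η.coe_nonneg]
    exact (ENNReal.ofReal_le_ofReal this).trans (by simp)
  -- Step 3: conclude by taking inf over s
  rw [abscissa, sInf_eq_iInf',
    ENNReal.mul_iInf' (by simp) (fun h => absurd h (ENNReal.ofReal_pos.2 hc).ne')]
  refine le_iInf fun x => ?_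
  obtain ⟨s, hs, hsum, hx⟩ := x.2
  calc growthIndicator μ u ≤ ENNReal.ofReal (c * s) := key2 s hs hsum
    _ = ENNReal.ofReal c * x.1 := by rw [hx, ENNReal.ofReal_mul hc.le]

/-- The growth indicator is bounded by `(min_i uᵢ) · δ_min` and by `(max_i uᵢ) · δ_max`,
where `δ_min`, `δ_max` are the abscissas of convergence of the minimum and maximum of
the coordinates of the Cartan projection. -/
theorem stmt2 (k : ℕ) (hk : 1 ≤ k) (Γ : Type*) [Countable Γ]
    (μ : Γ → EuclideanSpace ℝ (Fin k)) (hμ : ∀ γ i, 0 ≤ μ γ i)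
    (u : EuclideanSpace ℝ (Fin k)) (hu : ∀ i, 0 < u i) :
    growthIndicator μ u ≤
      ENNReal.ofReal (⨅ i : Fin k, u i) * abscissa (fun γ => ⨅ i : Fin k, μ γ i) ∧
    growthIndicator μ u ≤
      ENNReal.ofReal (⨆ i : Fin k, u i) * abscissa (fun γ => ⨆ i : Fin k, μ γ i) := by
  haveI : Nonempty (Fin k) := ⟨⟨0, hk⟩⟩
  obtain ⟨i₀, hi₀⟩ := exists_eq_ciInf_of_finite (f := fun i => u i)
  obtain ⟨i₁, hi₁⟩ := exists_eq_ciSup_of_finite (f := fun i => u i)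
  have hm : 0 < ⨅ i, u i := hi₀ ▸ hu i₀
  have hM : 0 < ⨆ i, u i := hi₁ ▸ hu i₁
  have hune : u ≠ 0 := by
    intro h
    have := hu i₀
    rw [h] at this
    simp at this
  have hun : 0 < ‖u‖ := norm_pos_iff.2 hune
  have hproj : ∀ i : Fin k, Continuous fun v : EuclideanSpace ℝ (Fin k) => v i :=
    fun i => (EuclideanSpace.proj (𝕜 := ℝ) i).continuous
  constructor
  · refine growthIndicator_le_of_cones μ u hun _ _ hm fun ε hε => ?_
    refine ⟨{v | ∃ i, v i * ‖u‖ < (1 + ε) * (⨅ i, u i) * ‖v‖}, ?_, ?_, ?_, ?_⟩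
    · have : {v : EuclideanSpace ℝ (Fin k) | ∃ i, v i * ‖u‖ < (1 + ε) * (⨅ i, u i) * ‖v‖}
          = ⋃ i, {v : EuclideanSpace ℝ (Fin k) | v i * ‖u‖ < (1 + ε) * (⨅ i, u i) * ‖v‖} := by
        ext v; simp [Set.mem_iUnion]
      rw [this]
      exact isOpen_iUnion fun i => isOpen_lt ((hproj i).mul continuous_const)
        (continuous_const.mul continuous_norm)
    · rintro v ⟨i, hi⟩ r hr
      refine ⟨i, ?_⟩
      have h1 : (r • v) i = r * v i := rfl
      rw [h1, norm_smul, Real.norm_eq_abs, abs_of_pos hr]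
      calc r * v i * ‖u‖ = r * (v i * ‖u‖) := by ring
        _ < r * ((1 + ε) * (⨅ i, u i) * ‖v‖) := by
            exact mul_lt_mul_of_pos_left hi hr
        _ = (1 + ε) * (⨅ i, u i) * (r * ‖v‖) := by ring
    · exact ⟨i₀, by rw [hi₀]; nlinarith [mul_pos (mul_pos hε hm) hun]⟩
    · rintro γ ⟨i, hi⟩
      have h1 : (⨅ j, μ γ j) ≤ μ γ i := ciInf_le (Finite.bddBelow_range _) i
      calc (⨅ j, μ γ j) * ‖u‖ ≤ μ γ i * ‖u‖ :=
            mul_le_mul_of_nonneg_right h1 (norm_nonneg u)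
        _ ≤ (1 + ε) * (⨅ i, u i) * ‖μ γ‖ := hi.le
  · refine growthIndicator_le_of_cones μ u hun _ _ hM fun ε hε => ?_
    refine ⟨{v | ∀ i, v i * ‖u‖ < (1 + ε) * (⨆ i, u i) * ‖v‖}, ?_, ?_, ?_, ?_⟩
    · have : {v : EuclideanSpace ℝ (Fin k) | ∀ i, v i * ‖u‖ < (1 + ε) * (⨆ i, u i) * ‖v‖}
          = ⋂ i, {v : EuclideanSpace ℝ (Fin k) | v i * ‖u‖ < (1 + ε) * (⨆ i, u i) * ‖v‖} := by
        ext v; simp [Set.mem_iInter]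
      rw [this]
      exact isOpen_iInter_of_finite fun i => isOpen_lt ((hproj i).mul continuous_const)
        (continuous_const.mul continuous_norm)
    · rintro v hv r hr
      intro i
      have h1 : (r • v) i = r * v i := rfl
      rw [h1, norm_smul, Real.norm_eq_abs, abs_of_pos hr]
      calc r * v i * ‖u‖ = r * (v i * ‖u‖) := by ring
        _ < r * ((1 + ε) * (⨆ i, u i) * ‖v‖) := mul_lt_mul_of_pos_left (hv i) hr
        _ = (1 + ε) * (⨆ i, u i) * (r * ‖v‖) := by ring
    · intro i
      have h1 : u i ≤ ⨆ j, u j := le_ciSup (Finite.bddAbove_range _) i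
      nlinarith [mul_pos (mul_pos hε hM) hun, mul_le_mul_of_nonneg_right h1 (norm_nonneg u)]
    · intro γ hγ
      obtain ⟨i, hi⟩ := exists_eq_ciSup_of_finite (f := fun j => μ γ j)
      calc (⨆ j, μ γ j) * ‖u‖ = μ γ i * ‖u‖ := by rw [hi]
        _ ≤ (1 + ε) * (⨆ i, u i) * ‖μ γ‖ := (hγ i).le
end
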